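/- Let R ⊆ S be an integral extension of Noetherian rings and I an ideal of R. Then the contraction to R of the inner integral closure of IS equals the inner integral closure of I. -/

import Mathlib

/-- The integral closure of an ideal `I`: elements `x` satisfying a monic equation
`x^d + a 1 * x^(d-1) + ... + a d = 0` with `a j ∈ I^j` for `1 ≤ j ≤ d`. -/
def Ideal.intClosure {R : Type*} [CommRing R] (I : Ideal R) : Set R :=
  {x | ∃ (d : ℕ) (a : ℕ → R), 0 < d ∧ (∀ j, 1 ≤ j → j ≤ d → a j ∈ I ^ j) ∧
    x ^ d + ∑ j ∈ Finset.Icc 1 d, a j * x ^ (d - j) = 0}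

/-- The inner integral closure of an ideal `I`:
`{ r | ∃ n ≥ 1, r ^ n ∈ integral closure of I ^ (n+1) }`. -/
def Ideal.innerIntClosure {R : Type*} [CommRing R] (I : Ideal R) : Set R :=
  {r | ∃ n : ℕ, 1 ≤ n ∧ r ^ n ∈ (I ^ (n + 1)).intClosure}


open Polynomial in
lemma detTrick {R A : Type*} [CommRing R] [CommRing A] [Algebra R A]
    [Module.Finite R A] [IsNoetherianRing R] (J : Ideal R) (x : R)
    (hx : algebraMap R A x ∈ (J.map (algebraMap R A)).intClosure) :
    ∃ (N : ℕ) (c : ℕ → R), 1 ≤ N ∧ (∀ j, 1 ≤ j → j ≤ N → c j ∈ J ^ j) ∧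
      algebraMap R A (x ^ N + ∑ j ∈ Finset.Icc 1 N, c j * x ^ (N - j)) = 0 := by
  classical
  rcases subsingleton_or_nontrivial R with hR | hR
  · have : Subsingleton A := by
      refine subsingleton_of_zero_eq_one ?_
      rw [← map_one (algebraMap R A), ← map_zero (algebraMap R A)]
      exact congrArg _ (Subsingleton.elim _ _)
    exact ⟨1, fun _ => 0, le_refl 1, fun j _ _ => zero_mem _, Subsingleton.elim _ _⟩
  obtain ⟨d, a, hd, ha, heq⟩ := hx
  set f := algebraMap R A with hf
  set x' := f x with hx'
  set K : Ideal A := J.map f with hK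
  set X : Ideal A := Ideal.span {x'} with hXdef
  set L : Ideal A := (K + X) ^ (d - 1) with hL
  have hxmem : ∀ j, 1 ≤ j → j ≤ d → K ^ j * X ^ (d - j) ≤ K * L := by
    intro j hj1 hjd
    have h1 : K ^ j * X ^ (d - j) = K * (K ^ (j - 1) * X ^ (d - j)) := by
      rw [← mul_assoc]
      congr 1
      rw [← pow_succ']
      congr 1
      omega
    rw [h1, hL]
    refine Ideal.mul_mono_right ?_
    calc K ^ (j - 1) * X ^ (d - j)
        ≤ (K + X) ^ (j - 1) * (K + X) ^ (d - j) :=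
          Ideal.mul_mono (Ideal.pow_right_mono le_sup_left _)
            (Ideal.pow_right_mono le_sup_right _)
      _ = (K + X) ^ (d - 1) := by rw [← pow_add]; congr 1; omega
  have hxd : x' ^ d ∈ K * L := by
    have h1 : x' ^ d = ∑ j ∈ Finset.Icc 1 d, -(a j * x' ^ (d - j)) := by
      rw [Finset.sum_neg_distrib]
      exact eq_neg_of_add_eq_zero_left heq
    rw [h1]
    refine Ideal.sum_mem _ fun j hj => neg_mem ?_
    obtain ⟨hj1, hjd⟩ := Finset.mem_Icc.mp hj
    exact hxmem j hj1 hjd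
      (Ideal.mul_mem_mul (ha j hj1 hjd)
        (Ideal.pow_mem_pow (Ideal.mem_span_singleton_self x') _))
  have hstep : ∀ m : ℕ, X * (K + X) ^ m ≤ K * (K + X) ^ m + X ^ (m + 1) := by
    intro m
    induction m with
    | zero => simp [Ideal.add_eq_sup]
    | succ m ih =>
      have h1 : X * (K + X) ^ (m + 1) = (K + X) * (X * (K + X) ^ m) := by ring
      rw [h1]
      calc (K + X) * (X * (K + X) ^ m)
          ≤ (K + X) * (K * (K + X) ^ m + X ^ (m + 1)) := Ideal.mul_mono_right ih
        _ = K * (K + X) ^ (m + 1) + (K * X ^ (m + 1) + X ^ (m + 2)) := by ring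
        _ ≤ K * (K + X) ^ (m + 1) + X ^ (m + 1 + 1) := by
            rw [Ideal.add_eq_sup, Ideal.add_eq_sup, Ideal.add_eq_sup]
            refine sup_le le_sup_left (sup_le ?_ ?_)
            · exact le_sup_of_le_left
                (Ideal.mul_mono_right (Ideal.pow_right_mono le_sup_right _))
            · exact le_sup_right
  have hXL : X * L ≤ K * L := by
    have h1 : X * L ≤ K * L + X ^ d := by
      have := hstep (d - 1)
      rw [← hL] at this
      have h2 : d - 1 + 1 = d := by omega
      rwa [h2] at this
    refine le_trans h1 ?_
    rw [Ideal.add_eq_sup]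
    refine sup_le le_rfl ?_
    rw [hXdef, Ideal.span_singleton_pow, Ideal.span_le, Set.singleton_subset_iff]
    exact hxd
  -- module-theoretic part
  set Lsub : Submodule R A := Submodule.restrictScalars R L with hLsub
  haveI : Module.Finite R Lsub := Module.Finite.iff_fg.mpr (IsNoetherian.noetherian Lsub)
  have hmul : ∀ y ∈ Lsub, (LinearMap.mul R A x') y ∈ Lsub := by
    intro y hy
    have : x' * y ∈ X * L := Ideal.mul_mem_mul (Ideal.mem_span_singleton_self x') hy
    exact Ideal.mul_le_right (hXL this)
  set fEnd : Module.End R Lsub := (LinearMap.mul R A x').restrict hmul with hfEnd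
  have hsmul : (J • Lsub : Submodule R A) = Submodule.restrictScalars R (K * L) := by
    rw [← Ideal.smul_eq_mul, hK, Ideal.smul_restrictScalars]
  have hrange : LinearMap.range fEnd ≤ J • (⊤ : Submodule R Lsub) := by
    rintro _ ⟨m, rfl⟩
    rw [Submodule.mem_smul_top_iff, hsmul]
    show x' * (m : A) ∈ K * L
    exact hXL (Ideal.mul_mem_mul (Ideal.mem_span_singleton_self x') m.2)
  obtain ⟨p, hp, -, hpc, hpe⟩ :=
    LinearMap.exists_monic_and_coeff_mem_pow_and_aeval_eq_zero_of_range_le_smul R fEnd J hrange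
  -- replace p by p * X to make degree positive
  set q : R[X] := p * Polynomial.X with hq
  have hpne : p ≠ 0 := hp.ne_zero
  have hqmonic : q.Monic := by
    unfold Polynomial.Monic
    rw [hq, Polynomial.leadingCoeff_mul_X]
    exact hp
  have hqdeg : q.natDegree = p.natDegree + 1 := Polynomial.natDegree_mul_X hpne
  have hqc : ∀ k, q.coeff k ∈ J ^ (q.natDegree - k) := by
    intro k
    cases k with
    | zero => rw [hq, Polynomial.coeff_mul_X_zero]; exact zero_mem _
    | succ i =>
      rw [hq, Polynomial.coeff_mul_X]
      have := hpc i
      rwa [show q.natDegree - (i + 1) = p.natDegree - i by omega]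
  have hqe : Polynomial.aeval fEnd q = 0 := by
    rw [hq, map_mul, hpe, zero_mul]
  set n := q.natDegree with hn
  have hn1 : 1 ≤ n := by omega
  -- the element x'^(d-1) of Lsub
  have hxdm : x' ^ (d - 1) ∈ Lsub := by
    show x' ^ (d - 1) ∈ L
    rw [hL]
    exact Ideal.pow_right_mono le_sup_right _
      (Ideal.pow_mem_pow (Ideal.mem_span_singleton_self x') _)
  set m₀ : Lsub := ⟨x' ^ (d - 1), hxdm⟩ with hm₀
  have hpow : ∀ i : ℕ, ((fEnd ^ i) m₀ : A) = x' ^ i * x' ^ (d - 1) := by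
    intro i
    induction i with
    | zero => simp [hm₀]
    | succ i ih =>
      rw [pow_succ', Module.End.mul_apply]
      have h2 : (fEnd ((fEnd ^ i) m₀) : A) = x' * ((fEnd ^ i) m₀ : A) := rfl
      rw [h2, ih]
      ring
  have h2 : (0 : Lsub) = ∑ i ∈ Finset.range (n + 1), q.coeff i • (fEnd ^ i) m₀ := by
    rw [← Polynomial.sum_over_range' q (f := fun i b => b • ((fEnd ^ i) m₀)) (fun i => zero_smul R _) (n + 1) (by omega),
      ← Polynomial.aeval_endomorphism, hqe]
    rfl
  have h3 : ∑ i ∈ Finset.range (n + 1), f (q.coeff i) * (x' ^ i * x' ^ (d - 1)) = 0 := by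
    have h4 := congrArg (Subtype.val) h2
    simp only [Submodule.coe_sum, SetLike.val_smul, hpow, ZeroMemClass.coe_zero,
      Algebra.smul_def] at h4
    exact h4.symm
  refine ⟨n + (d - 1), fun j => if j ≤ n then q.coeff (n - j) else 0, by omega,
    ?_, ?_⟩
  · intro j hj1 hjN
    by_cases hjn : j ≤ n
    · simp only [hjn, if_pos]
      have := hqc (n - j)
      rwa [show n - (n - j) = j by omega] at this
    · simp only [hjn, if_neg, not_false_iff]
      exact zero_mem _
  · have hReq : x ^ (n + (d - 1)) + ∑ j ∈ Finset.Icc 1 (n + (d - 1)),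
        (if j ≤ n then q.coeff (n - j) else 0) * x ^ (n + (d - 1) - j)
        = ∑ i ∈ Finset.range (n + 1), q.coeff i * x ^ (i + (d - 1)) := by
      rw [Finset.sum_range_succ, Polynomial.Monic.coeff_natDegree hqmonic]
      have hsub : Finset.Icc 1 n ⊆ Finset.Icc 1 (n + (d - 1)) :=
        Finset.Icc_subset_Icc_right (by omega)
      rw [← Finset.sum_subset hsub (by
        intro j hj hjn
        simp only [Finset.mem_Icc] at hj hjn
        have hh : ¬ j ≤ n := by omega
        simp [hh])]
      have hbij : ∑ j ∈ Finset.Icc 1 n,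
          (if j ≤ n then q.coeff (n - j) else 0) * x ^ (n + (d - 1) - j)
          = ∑ i ∈ Finset.range n, q.coeff i * x ^ (i + (d - 1)) := by
        refine Finset.sum_nbij' (fun j => n - j) (fun i => n - i) ?_ ?_ ?_ ?_ ?_
        · intro j hj
          simp only [Finset.mem_Icc] at hj
          simp only [Finset.mem_range]
          omega
        · intro i hi
          simp only [Finset.mem_range] at hi
          simp only [Finset.mem_Icc]
          omega
        · intro j hj
          simp only [Finset.mem_Icc] at hj
          omega
        · intro i hi
          simp only [Finset.mem_range] at hi
          omega
        · intro j hj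
          simp only [Finset.mem_Icc] at hj
          rw [if_pos hj.2]
          congr 2
          omega
      rw [hbij, one_mul, add_comm]
    rw [hReq, map_sum, ← h3]
    refine Finset.sum_congr rfl fun i hi => ?_
    rw [map_mul, map_pow, pow_add]

lemma contract {R S : Type*} [CommRing R] [CommRing S] [IsNoetherianRing R]
    [Algebra R S] [Algebra.IsIntegral R S]
    (hinj : Function.Injective (algebraMap R S)) (J : Ideal R) (x : R)
    (hx : algebraMap R S x ∈ (J.map (algebraMap R S)).intClosure) :
    x ∈ J.intClosure := by
  classical
  obtain ⟨d, a, hd, ha, heq⟩ := hx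
  set f := algebraMap R S with hf
  have key : ∀ j : ℕ, ∃ (m : ℕ) (b : Fin m → R) (c : Fin m → S),
      1 ≤ j → j ≤ d → (∀ i, b i ∈ J ^ j) ∧ a j = ∑ i, f (b i) * c i := by
    intro j
    by_cases hj : 1 ≤ j ∧ j ≤ d
    · have h1 : a j ∈ Submodule.span S (f '' (J ^ j : Ideal R)) := by
        have h2 := ha j hj.1 hj.2
        rw [← Ideal.map_pow, Ideal.map] at h2
        exact h2
      rw [Submodule.mem_span_set'] at h1
      obtain ⟨m, cf, g, hg⟩ := h1
      choose b hb hfb using fun i => (g i).2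
      refine ⟨m, b, cf, fun _ _ => ⟨hb, ?_⟩⟩
      rw [← hg]
      refine Finset.sum_congr rfl fun i _ => ?_
      rw [hfb i, smul_eq_mul, mul_comm]
    · exact ⟨0, ![], ![], fun h1 h2 => absurd ⟨h1, h2⟩ hj⟩
  choose m b c hkey using key
  set T : Set S := ⋃ (j : ℕ) (_ : j ≤ d), Set.range (c j) with hT
  have hTfin : T.Finite :=
    Set.Finite.biUnion (Set.finite_Iic d) fun j _ => Set.finite_range (c j)
  set A₀ : Subalgebra R S := Algebra.adjoin R T with hA₀
  haveI hfin : Module.Finite R A₀ :=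
    Module.Finite.iff_fg.mpr
      (fg_adjoin_of_finite hTfin fun s _ => Algebra.IsIntegral.isIntegral s)
  have hcmem : ∀ j, j ≤ d → ∀ i, c j i ∈ A₀ := by
    intro j hj i
    refine Algebra.subset_adjoin ?_
    exact Set.mem_iUnion.mpr ⟨j, Set.mem_iUnion.mpr ⟨hj, Set.mem_range_self i⟩⟩
  have hamem : ∀ j, 1 ≤ j → j ≤ d → a j ∈ A₀ := by
    intro j hj1 hjd
    rw [(hkey j hj1 hjd).2]
    exact Subalgebra.sum_mem _ fun i _ =>
      Subalgebra.mul_mem _ (Subalgebra.algebraMap_mem _ _) (hcmem j hjd i)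
  set a₀ : ℕ → A₀ := fun j =>
    if h : 1 ≤ j ∧ j ≤ d then ⟨a j, hamem j h.1 h.2⟩ else 0 with ha₀
  have hx₀ : algebraMap R A₀ x ∈ (J.map (algebraMap R A₀)).intClosure := by
    refine ⟨d, a₀, hd, ?_, ?_⟩
    · intro j hj1 hjd
      rw [← Ideal.map_pow]
      have hval : a₀ j = ∑ i, algebraMap R A₀ (b j i) * ⟨c j i, hcmem j hjd i⟩ := by
        apply Subtype.val_injective
        rw [ha₀]
        simp only [dif_pos (And.intro hj1 hjd)]
        rw [(hkey j hj1 hjd).2]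
        push_cast
        rfl
      rw [hval]
      exact Ideal.sum_mem _ fun i _ =>
        Ideal.mul_mem_right _ _ (Ideal.mem_map_of_mem _ ((hkey j hj1 hjd).1 i))
    · apply Subtype.val_injective
      push_cast
      have hav : ∀ j ∈ Finset.Icc 1 d, ((a₀ j : S)) * (f x) ^ (d - j)
          = a j * (f x) ^ (d - j) := by
        intro j hj
        obtain ⟨hj1, hjd⟩ := Finset.mem_Icc.mp hj
        rw [ha₀]
        simp only [dif_pos (And.intro hj1 hjd)]
      calc ((algebraMap R A₀ x : S)) ^ d + ∑ j ∈ Finset.Icc 1 d, ((a₀ j : S)) * ((algebraMap R A₀ x : S)) ^ (d - j)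
          = (f x) ^ d + ∑ j ∈ Finset.Icc 1 d, a j * (f x) ^ (d - j) := by
            rw [show ((algebraMap R A₀ x : S)) = f x from rfl]
            exact congrArg _ (Finset.sum_congr rfl hav)
        _ = 0 := heq
  obtain ⟨N, cc, hN, hcc, hzero⟩ := detTrick J x hx₀
  refine ⟨N, cc, hN, hcc, hinj ?_⟩
  rw [map_zero]
  have : ((algebraMap R A₀ (x ^ N + ∑ j ∈ Finset.Icc 1 N, cc j * x ^ (N - j)) : S)) = f _ := rfl
  rw [← this, hzero, ZeroMemClass.coe_zero]

/-- If `R ⊆ S` is an integral extension, the contraction of the inner integral closure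
of `IS` is the inner integral closure of `I`. -/
theorem stmt5 {R S : Type*} [CommRing R] [CommRing S]
    [IsNoetherianRing R] [IsNoetherianRing S] [Algebra R S] [Algebra.IsIntegral R S]
    (hinj : Function.Injective (algebraMap R S)) (I : Ideal R) :
    (algebraMap R S) ⁻¹' (Ideal.map (algebraMap R S) I).innerIntClosure
      = I.innerIntClosure := by
  ext r
  simp only [Set.mem_preimage]
  constructor
  · rintro ⟨n, hn, hmem⟩
    rw [show (algebraMap R S r) ^ n = algebraMap R S (r ^ n) from (map_pow _ _ _).symm,
      show (Ideal.map (algebraMap R S) I) ^ (n + 1)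
        = (I ^ (n + 1)).map (algebraMap R S) from (Ideal.map_pow _ _ _).symm] at hmem
    exact ⟨n, hn, contract hinj _ _ hmem⟩
  · rintro ⟨n, hn, d, a, hd, ha, heq⟩
    refine ⟨n, hn, d, fun j => algebraMap R S (a j), hd, ?_, ?_⟩
    · intro j hj1 hjd
      have h1 := ha j hj1 hjd
      rw [← Ideal.map_pow, ← Ideal.map_pow]
      exact Ideal.mem_map_of_mem _ h1
    · have h2 := congrArg (algebraMap R S) heq
      simpa only [map_add, map_pow, map_sum, map_mul, map_zero] using h2
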